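/- The set of finite infixes of the Thue–Morse sequence is neither a regular language nor a context-free language. -/

import Mathlib

/-- A finite word `u` is an infix of the infinite word `w : ℕ → A`. -/
def IsInfInfix {A : Type*} (w : ℕ → A) (u : List A) : Prop :=
  ∃ i : ℕ, u = (List.range u.length).map fun j => w (i + j)

/-- The Thue–Morse sequence: `thueMorse n` is the parity of the number of ones in
the binary expansion of `n`. -/
def thueMorse (n : ℕ) : Bool := decide (Odd ((Nat.digits 2 n).count 1))

/-- A language is regular if it is accepted by a DFA with finitely many states. -/
def IsRegularLang {A : Type*} (L : Set (List A)) : Prop :=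
  ∃ (Q : Type) (_ : Fintype Q) (M : DFA A Q), ∀ u : List A, u ∈ M.accepts ↔ u ∈ L

open Computability

section Aux

lemma tm_even (m : ℕ) : thueMorse (2 * m) = thueMorse m := by
  rcases Nat.eq_zero_or_pos m with rfl | hm
  · rfl
  · unfold thueMorse
    rw [Nat.digits_def' (by norm_num : 1 < 2) (by omega : 0 < 2 * m)]
    simp [Nat.mul_div_cancel_left, Nat.mul_mod_right, hm.ne']

lemma tm_odd (m : ℕ) : thueMorse (2 * m + 1) = !thueMorse m := by
  unfold thueMorse
  rw [Nat.digits_def' (by norm_num : 1 < 2) (by omega : 0 < 2 * m + 1)]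
  have h1 : (2 * m + 1) % 2 = 1 := by omega
  have h2 : (2 * m + 1) / 2 = m := by omega
  rw [h1, h2, List.count_cons_self]
  by_cases h : Odd (List.count 1 (Nat.digits 2 m))
  · simp [h, Nat.odd_add_one]
  · simp [h, Nat.odd_add_one]

lemma tm_ne (m : ℕ) : thueMorse (2 * m) ≠ thueMorse (2 * m + 1) := by
  rw [tm_even, tm_odd]; cases thueMorse m <;> simp

lemma tm_not_periodic : ∀ p, 0 < p → ∀ i, ¬ (∀ j, j < 4 * p → thueMorse (i + j) = thueMorse (i + j + p)) := by
  intro p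
  induction p using Nat.strong_induction_on with
  | _ p IH =>
  intro hp i H
  obtain ⟨i', e, he1, he⟩ : ∃ i' e, e ≤ 1 ∧ 2 * i' = i + e := ⟨(i+1)/2, 2*((i+1)/2) - i, by omega, by omega⟩
  rcases Nat.even_or_odd p with ⟨q, hq⟩ | ⟨q, hq⟩
  · -- p = 2q even
    have hq1 : 0 < q := by omega
    refine IH q (by omega) hq1 i' (fun j hj => ?_)
    have h1 : 2 * (i' + j) = i + (e + 2 * j) := by omega
    have h2 : 2 * (i' + j + q) = i + (e + 2 * j) + p := by omega
    calc thueMorse (i' + j) = thueMorse (2 * (i' + j)) := (tm_even _).symm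
      _ = thueMorse (i + (e + 2 * j) + p) := by rw [h1]; exact H _ (by omega)
      _ = thueMorse (2 * (i' + j + q)) := by rw [h2]
      _ = thueMorse (i' + j + q) := tm_even _
  · -- p = 2q + 1 odd
    have hA : ∀ s, s < 2 * p → thueMorse (i' + s) = !thueMorse (i' + s + q) := by
      intro s hs
      have h1 : 2 * (i' + s) = i + (e + 2 * s) := by omega
      have h2 : 2 * (i' + s + q) + 1 = i + (e + 2 * s) + p := by omega
      calc thueMorse (i' + s) = thueMorse (2 * (i' + s)) := (tm_even _).symm
        _ = thueMorse (i + (e + 2 * s) + p) := by rw [h1]; exact H _ (by omega)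
        _ = thueMorse (2 * (i' + s + q) + 1) := by rw [h2]
        _ = !thueMorse (i' + s + q) := tm_odd _
    rcases Nat.eq_zero_or_pos q with rfl | hq1
    · have := hA 0 (by omega)
      simp at this
    · have hB : ∀ s, 2 * s + 1 + e < 4 * p → thueMorse (i' + s + q + 1) = !thueMorse (i' + s) := by
        intro s hs
        have h1 : 2 * (i' + s) + 1 = i + (e + 2 * s + 1) := by omega
        have h2 : 2 * (i' + s + q + 1) = i + (e + 2 * s + 1) + p := by omega
        have c1 : (!thueMorse (i' + s)) = thueMorse (2 * (i' + s) + 1) := (tm_odd _).symm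
        calc thueMorse (i' + s + q + 1) = thueMorse (2 * (i' + s + q + 1)) := (tm_even _).symm
          _ = thueMorse (i + (e + 2 * s + 1) + p) := by rw [h2]
          _ = thueMorse (i + (e + 2 * s + 1)) := (H _ (by omega)).symm
          _ = thueMorse (2 * (i' + s) + 1) := by rw [h1]
          _ = !thueMorse (i' + s) := tm_odd _
      have hconst : ∀ s, s < 2 → thueMorse (i' + s) = thueMorse (i' + s + 1) := by
        intro s hs
        have e1 := hA (s + 1) (by omega)
        have e2 := hB s (by omega)
        have h3 : i' + s + q + 1 = i' + (s + 1) + q := by omega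
        rw [h3] at e2
        rw [show i' + s + 1 = i' + (s+1) by omega, e1, e2, Bool.not_not]
      rcases Nat.even_or_odd i' with ⟨r, hr⟩ | ⟨r, hr⟩
      · have := hconst 0 (by omega)
        rw [show i' + 0 = 2 * r by omega] at this
        exact tm_ne r this
      · have := hconst 1 (by omega)
        rw [show i' + 1 = 2 * (r + 1) by omega] at this
        exact tm_ne (r + 1) this

def seg {A : Type*} (w : ℕ → A) (i n : ℕ) : List A :=
  (List.range n).map fun j => w (i + j)

@[simp] lemma seg_length {A : Type*} (w : ℕ → A) (i n : ℕ) : (seg w i n).length = n := by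
  simp [seg]

lemma isInfInfix_iff {A : Type*} (w : ℕ → A) (u : List A) :
    IsInfInfix w u ↔ ∃ i, u = seg w i u.length := Iff.rfl

lemma seg_add {A : Type*} (w : ℕ → A) (i m n : ℕ) :
    seg w i (m + n) = seg w i m ++ seg w (i + m) n := by
  simp only [seg, List.range_add, List.map_append, List.map_map]
  congr 1
  refine List.map_congr_left (fun j hj => ?_)
  simp only [Function.comp_apply]
  congr 1
  omega

@[simp] lemma seg_getElem {A : Type*} (w : ℕ → A) (i n j : ℕ) (h : j < (seg w i n).length) :
    (seg w i n)[j] = w (i + j) := by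
  simp [seg]

lemma isInfInfix_of_append {A : Type*} (w : ℕ → A) (l u r : List A)
    (h : IsInfInfix w (l ++ u ++ r)) : IsInfInfix w u := by
  obtain ⟨i, hi⟩ := h
  refine ⟨i + l.length, ?_⟩
  show u = seg w (i + l.length) u.length
  have hlen : (l ++ u ++ r).length = l.length + (u.length + r.length) := by
    simp [Nat.add_assoc]
  have hi' : l ++ u ++ r = seg w i (l.length + (u.length + r.length)) := by
    rw [← hlen]; exact hi
  rw [seg_add, seg_add] at hi'
  have h1 : l ++ (u ++ r) = seg w i l.length ++ (seg w (i + l.length) u.length ++ seg w (i + l.length + u.length) r.length) := by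
    simpa [List.append_assoc] using hi'
  have h2 := (List.append_inj h1 (by simp)).2
  exact (List.append_inj h2 (by simp)).1

def lpow {A : Type*} (n : ℕ) (w : List A) : List A := (List.replicate n w).flatten

@[simp] lemma lpow_zero {A : Type*} (w : List A) : lpow 0 w = [] := rfl

lemma lpow_succ {A : Type*} (n : ℕ) (w : List A) : lpow (n + 1) w = w ++ lpow n w := by
  simp [lpow, List.replicate_succ]

lemma lpow_succ' {A : Type*} (n : ℕ) (w : List A) : lpow (n + 1) w = lpow n w ++ w := by
  induction n with
  | zero => simp [lpow_succ]
  | succ k ih => rw [lpow_succ, ih, ← List.append_assoc, ← lpow_succ, ih]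

@[simp] lemma lpow_length {A : Type*} (n : ℕ) (w : List A) : (lpow n w).length = n * w.length := by
  induction n with
  | zero => simp
  | succ k ih => simp [lpow_succ, ih]; ring

/-- Key: the fifth power of a nonempty word is not an infix of Thue–Morse. -/
lemma key_not_infix (w : List Bool) (hw : w ≠ []) : ¬ IsInfInfix thueMorse (lpow 5 w) := by
  intro h
  obtain ⟨i, hi⟩ := h
  have hp1 : 0 < w.length := List.length_pos_iff.mpr hw
  refine tm_not_periodic w.length hp1 i (fun j hj => ?_)
  have hul : (lpow 5 w).length = 5 * w.length := by simp
  have h1 : lpow 5 w = w ++ lpow 4 w := lpow_succ 4 w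
  have h2 : lpow 5 w = lpow 4 w ++ w := lpow_succ' 4 w
  have hj1 : j < (lpow 5 w).length := by omega
  have hj2 : j + w.length < (lpow 5 w).length := by omega
  have hjr : j < (lpow 4 w).length := by simp; omega
  have e1 : (lpow 5 w)[j]'hj1 = thueMorse (i + j) := by
    rw [List.getElem_of_eq hi]
    simp
  have e2 : (lpow 5 w)[j + w.length]'hj2 = thueMorse (i + j + w.length) := by
    rw [List.getElem_of_eq hi]
    simp
    congr 1
    omega
  have e3 : (lpow 5 w)[j]'hj1 = (lpow 4 w)[j]'hjr := by
    rw [List.getElem_of_eq h2, List.getElem_append_left]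
  have e4 : (lpow 5 w)[j + w.length]'hj2 = (lpow 4 w)[j]'hjr := by
    rw [List.getElem_of_eq h1, List.getElem_append_right (by omega)]
    congr 1
    omega
  rw [← e1, ← e2, e3, e4]

lemma seg_isInfInfix (i n : ℕ) : IsInfInfix thueMorse (seg thueMorse i n) := by
  refine ⟨i, ?_⟩
  rw [seg_length]
  rfl

lemma not_regular : ¬ IsRegularLang {u | IsInfInfix thueMorse u} := by
  rintro ⟨Q, instF, M, hM⟩
  set x := seg thueMorse 0 (Fintype.card Q) with hx
  have hxmem : x ∈ M.accepts := (hM x).mpr (seg_isInfInfix 0 _)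
  have hxlen : Fintype.card Q ≤ x.length := by rw [hx, seg_length]
  obtain ⟨a, b, c, hsplit, -, hb, hsub⟩ := M.pumping_lemma hxmem hxlen
  have hmem : a ++ lpow 5 b ++ c ∈ ({a} * ({b}∗) * {c} : Language Bool) := by
    refine ⟨a ++ lpow 5 b, ⟨a, rfl, lpow 5 b, ?_, rfl⟩, c, rfl, by simp⟩
    show lpow 5 b ∈ ({b}∗ : Language Bool)
    rw [Language.mem_kstar]
    exact ⟨List.replicate 5 b, rfl, fun y hy => (List.eq_of_mem_replicate hy)⟩
  have hinf : IsInfInfix thueMorse (a ++ lpow 5 b ++ c) := (hM _).mp (hsub hmem)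
  exact key_not_infix b hb (isInfInfix_of_append _ _ _ _ hinf)


universe uN uT
variable {T : Type uN}

mutual
inductive Der (g : ContextFreeGrammar.{uN} T) : Symbol T g.NT → List T → ℕ → ℕ → Prop
  | leaf (t : T) : Der g (Symbol.terminal t) [t] 1 0
  | node (r : ContextFreeRule T g.NT) (hr : r ∈ g.rules) (w : List T) (n h : ℕ)
      (hd : DerList g r.output w n h) : Der g (Symbol.nonterminal r.input) w (n + 1) (h + 1)
inductive DerList (g : ContextFreeGrammar.{uN} T) : List (Symbol T g.NT) → List T → ℕ → ℕ → Prop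
  | nil : DerList g [] [] 0 0
  | cons {s : Symbol T g.NT} {w₁ : List T} {n₁ h₁ : ℕ} {ss : List (Symbol T g.NT)}
      {w₂ : List T} {n₂ h₂ : ℕ} :
      Der g s w₁ n₁ h₁ → DerList g ss w₂ n₂ h₂ →
      DerList g (s :: ss) (w₁ ++ w₂) (n₁ + n₂) (max h₁ h₂)
end

variable {g : ContextFreeGrammar.{uN} T}

lemma Der.cast' {s w w' n n' h h'} (d : Der g s w n h) (hw : w = w') (hn : n = n')
    (hh : h = h') : Der g s w' n' h' := by subst hw hn hh; exact d

lemma DerList.cast' {ss ss' w w' n n' h h'} (d : DerList g ss w n h) (hs : ss = ss')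
    (hw : w = w') (hn : n = n') (hh : h = h') : DerList g ss' w' n' h' := by
  subst hs hw hn hh; exact d

lemma DerList.append' : ∀ {xs w₁ n₁ h₁}, DerList g xs w₁ n₁ h₁ →
    ∀ {ys w₂ n₂ h₂}, DerList g ys w₂ n₂ h₂ →
    DerList g (xs ++ ys) (w₁ ++ w₂) (n₁ + n₂) (max h₁ h₂) := by
  intro xs
  induction xs with
  | nil => intro w₁ n₁ h₁ d; cases d; intro ys w₂ n₂ h₂ d₂; simpa using d₂
  | cons s xs ih =>
    intro w₁ n₁ h₁ d
    cases d with
    | cons dh dt =>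
      intro ys w₂ n₂ h₂ d₂
      exact (DerList.cons dh (ih dt d₂)).cast' rfl (by simp) (by omega)
        (by rw [Nat.max_assoc])

lemma DerList.singleton' {s w n h} (d : Der g s w n h) : DerList g [s] w n h :=
  (DerList.cons d DerList.nil).cast' rfl (by simp) (by omega) (by omega)

lemma Der.one_le {s w n h} (d : Der g s w n h) : 1 ≤ n := by cases d <;> omega

/-- terminal strings derive themselves -/
lemma derList_terminal : ∀ w : List T, DerList g (w.map Symbol.terminal) w w.length 0 := by
  intro w
  induction w with
  | nil => exact DerList.nil
  | cons a w ih =>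
    exact (DerList.cons (Der.leaf a) ih).cast' (by simp) (by simp) (by rw [List.length_cons]; omega) (by simp)

lemma DerList.split : ∀ {xs : List (Symbol T g.NT)} {ys w n h}, DerList g (xs ++ ys) w n h →
    ∃ w₁ w₂ n₁ n₂ h₁ h₂, w = w₁ ++ w₂ ∧ n = n₁ + n₂ ∧
      DerList g xs w₁ n₁ h₁ ∧ DerList g ys w₂ n₂ h₂ := by
  intro xs
  induction xs with
  | nil => intro ys w n h d; exact ⟨[], w, 0, n, 0, h, by simp, by simp, DerList.nil, d⟩
  | cons s xs ih =>
    intro ys w n h d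
    cases d with
    | @cons _ w₁ n₁ h₁ _ w₂ n₂ h₂ dh dt =>
      obtain ⟨a, b, na, nb, ha, hb, rfl, rfl, dxs, dys⟩ := ih dt
      exact ⟨w₁ ++ a, b, n₁ + na, nb, max h₁ ha, hb, by simp, by omega,
        DerList.cons dh dxs, dys⟩

lemma derList_of_derives {s : List (Symbol T g.NT)} {w : List T}
    (h : g.Derives s (w.map Symbol.terminal)) : ∃ n h', DerList g s w n h' := by
  induction h using Relation.ReflTransGen.head_induction_on with
  | refl => exact ⟨w.length, 0, derList_terminal w⟩
  | head hstep _ ih =>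
    obtain ⟨n, h', d⟩ := ih
    obtain ⟨r, hr, hrew⟩ := hstep
    obtain ⟨p, q, rfl, rfl⟩ := hrew.exists_parts
    obtain ⟨wl, w₃, nl, n₃, hl, h₃, rfl, -, dleft, dq⟩ := DerList.split d
    obtain ⟨w₁, w₂, n₁, n₂, h₁, h₂, rfl, -, dp, dout⟩ := DerList.split dleft
    have dmid : Der g (Symbol.nonterminal r.input) w₂ (n₂ + 1) (h₂ + 1) :=
      Der.node r hr _ _ _ dout
    refine ⟨_, _, (dp.append' ((DerList.singleton' dmid).append' dq)).cast' (by simp)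
      (by simp) rfl rfl⟩

lemma der_of_mem {w : List T} (hw : w ∈ g.language) :
    ∃ n h, Der g (Symbol.nonterminal g.initial) w n h := by
  have h := (ContextFreeGrammar.mem_language_iff g w).mp hw
  obtain ⟨n, h', d⟩ := derList_of_derives h
  cases d with
  | cons dh dt =>
    cases dt with
    | nil => exact ⟨_, _, dh.cast' (by simp) rfl rfl⟩

lemma Der.inv_nt {A w n h} (d : Der g (Symbol.nonterminal A) w n h) :
    ∃ r n' h', r ∈ g.rules ∧ r.input = A ∧ n = n' + 1 ∧ h = h' + 1 ∧
      DerList g r.output w n' h' := by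
  cases d with
  | node r hr w' n' h' dl => exact ⟨r, n', h', hr, rfl, rfl, rfl, dl⟩

/-- soundness -/
lemma der_sound : ∀ n, ∀ {s : Symbol T g.NT} {w h}, Der g s w n h →
    g.Derives [s] (w.map Symbol.terminal) := by
  intro n
  induction n using Nat.strong_induction_on with
  | _ n IH =>
  have listSound : ∀ (ss : List (Symbol T g.NT)) (w : List T) (m h : ℕ), m < n →
      DerList g ss w m h → g.Derives ss (w.map Symbol.terminal) := by
    intro ss
    induction ss with
    | nil => intro w m h _ d; cases d; exact Relation.ReflTransGen.refl
    | cons s ss ih =>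
      intro w m h hm d
      cases d with
      | @cons _ w₁ n₁ h₁ _ w₂ n₂ h₂ dh dt =>
        have hd1 : g.Derives [s] (w₁.map Symbol.terminal) := IH n₁ (by omega) dh
        have hd2 : g.Derives ss (w₂.map Symbol.terminal) := ih w₂ n₂ h₂ (by omega) dt
        have := (hd1.append_right ss).trans (hd2.append_left (w₁.map Symbol.terminal))
        simpa using this
  intro s w h d
  cases d with
  | leaf t => exact Relation.ReflTransGen.refl
  | node r hr w' n' h' dl =>
    refine Relation.ReflTransGen.head ⟨r, hr, ContextFreeRule.Rewrites.input_output⟩ ?_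
    exact listSound r.output _ n' h' (by omega) dl

/-- bound on rule output lengths -/
noncomputable def Mbnd (g : ContextFreeGrammar.{uN} T) : ℕ :=
  2 ⊔ g.rules.sup (fun r => r.output.length)

lemma two_le_Mbnd : 2 ≤ Mbnd g := by unfold Mbnd; exact le_sup_left

lemma output_le_Mbnd {r : ContextFreeRule T g.NT} (hr : r ∈ g.rules) :
    r.output.length ≤ Mbnd g := by
  unfold Mbnd; exact le_trans (Finset.le_sup (f := fun r => r.output.length) hr) le_sup_right

lemma der_bound : ∀ n, ∀ {s : Symbol T g.NT} {w h}, Der g s w n h →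
    w.length ≤ Mbnd g ^ h := by
  intro n
  induction n using Nat.strong_induction_on with
  | _ n IH =>
  have listBound : ∀ (ss : List (Symbol T g.NT)) (w : List T) (m h : ℕ), m < n →
      DerList g ss w m h → w.length ≤ ss.length * Mbnd g ^ h := by
    intro ss
    induction ss with
    | nil => intro w m h _ d; cases d; simp
    | cons s ss ih =>
      intro w m h hm d
      cases d with
      | @cons _ w₁ n₁ h₁ _ w₂ n₂ h₂ dh dt =>
        have b1 : w₁.length ≤ Mbnd g ^ h₁ := IH n₁ (by omega) dh
        have b2 : w₂.length ≤ ss.length * Mbnd g ^ h₂ := ih w₂ n₂ h₂ (by omega) dt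
        have p1 : Mbnd g ^ h₁ ≤ Mbnd g ^ (max h₁ h₂) :=
          Nat.pow_le_pow_right (by have := two_le_Mbnd (g := g); omega) (le_max_left _ _)
        have p2 : Mbnd g ^ h₂ ≤ Mbnd g ^ (max h₁ h₂) :=
          Nat.pow_le_pow_right (by have := two_le_Mbnd (g := g); omega) (le_max_right _ _)
        have b2' : w₂.length ≤ ss.length * Mbnd g ^ (max h₁ h₂) :=
          le_trans b2 (Nat.mul_le_mul_left _ p2)
        calc (w₁ ++ w₂).length = w₁.length + w₂.length := by simp
          _ ≤ Mbnd g ^ (max h₁ h₂) + ss.length * Mbnd g ^ (max h₁ h₂) := by omega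
          _ = (s :: ss).length * Mbnd g ^ (max h₁ h₂) := by simp [Nat.succ_mul]; ring
  intro s w h d
  cases d with
  | leaf t => simpa using Nat.one_le_pow' _ _
  | node r hr w' n' h' dl =>
    have hb := listBound r.output _ n' h' (by omega) dl
    calc w.length ≤ r.output.length * Mbnd g ^ h' := hb
      _ ≤ Mbnd g * Mbnd g ^ h' := Nat.mul_le_mul_right _ (output_le_Mbnd hr)
      _ = Mbnd g ^ (h' + 1) := by rw [pow_succ]; ring

/-- the finite set of nonterminals that can head a derivation node -/
noncomputable def Inputs (g : ContextFreeGrammar.{uN} T) : Finset g.NT :=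
  @Finset.image _ _ (Classical.decEq _) (fun r => r.input) g.rules

lemma mem_Inputs {A : g.NT} : A ∈ Inputs g ↔ ∃ r ∈ g.rules, r.input = A := by
  unfold Inputs
  exact @Finset.mem_image _ _ (Classical.decEq _) _ _ _

lemma Der.root_mem {A : g.NT} {w n h} (d : Der g (Symbol.nonterminal A) w n h) :
    A ∈ Inputs g := by
  obtain ⟨r, n', h', hr, hrA, -, -, -⟩ := d.inv_nt
  exact mem_Inputs.mpr ⟨r, hr, hrA⟩

/-- a one-hole context of size `c` around nonterminal `B`, rooted at `A` -/
def Ctx (g : ContextFreeGrammar.{uN} T) (A : g.NT) (v : List T) (B : g.NT) (z : List T)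
    (c : ℕ) : Prop :=
  ∀ ⦃w m h⦄, Der g (Symbol.nonterminal B) w m h →
    ∃ h', Der g (Symbol.nonterminal A) (v ++ w ++ z) (m + c) h'

lemma ctx_refl (A : g.NT) : Ctx g A [] A [] 0 :=
  fun w m h d => ⟨h, d.cast' (by simp) (by omega) rfl⟩

lemma ctx_comp {A v B z c v' C z' c'} (h1 : Ctx g A v B z c) (h2 : Ctx g B v' C z' c') :
    Ctx g A (v ++ v') C (z' ++ z) (c + c') := by
  intro w m h d
  obtain ⟨ha, da⟩ := h2 d
  obtain ⟨hb, db⟩ := h1 da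
  exact ⟨hb, db.cast' (by simp) (by omega) rfl⟩

lemma DerList.split_max : ∀ {ss : List (Symbol T g.NT)} {w n h}, DerList g ss w n h → 1 ≤ h →
    ∃ ss₁ s ss₂ w₁ w' w₂ n₁ n' n₂ h₁ h₂, ss = ss₁ ++ s :: ss₂ ∧ w = w₁ ++ w' ++ w₂ ∧
      n = n₁ + n' + n₂ ∧ Der g s w' n' h ∧ DerList g ss₁ w₁ n₁ h₁ ∧ DerList g ss₂ w₂ n₂ h₂ := by
  intro ss
  induction ss with
  | nil => intro w n h d hh; cases d; omega
  | cons s ss ih =>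
    intro w n h d hh
    cases d with
    | @cons _ w₁ n₁ h₁ _ w₂ n₂ h₂ dh dt =>
      by_cases hcmp : h₂ ≤ h₁
      · refine ⟨[], s, ss, [], w₁, w₂, 0, n₁, n₂, 0, h₂, by simp, by simp, by omega,
          dh.cast' rfl rfl (by omega), DerList.nil, dt⟩
      · have hh2 : 1 ≤ h₂ := by omega
        obtain ⟨ss₁, s', ss₂, a, w', b, na, n', nb, ha', hb', rfl, rfl, rfl, d', d₁, d₂⟩ :=
          ih dt hh2
        refine ⟨s :: ss₁, s', ss₂, w₁ ++ a, w', b, n₁ + na, n', nb, max h₁ ha', hb',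
          by simp, by simp, by omega, d'.cast' rfl rfl (by omega), DerList.cons dh d₁, d₂⟩

lemma der_step {A : g.NT} {w n h} (d : Der g (Symbol.nonterminal A) w n h) (hh : 2 ≤ h) :
    ∃ B v z c w' n', B ∈ Inputs g ∧ 1 ≤ c ∧ Ctx g A v B z c ∧
      Der g (Symbol.nonterminal B) w' n' (h - 1) ∧ w = v ++ w' ++ z ∧ n = n' + c := by
  obtain ⟨r, m, h₀, hr, hrA, rfl, rfl, dl⟩ := d.inv_nt
  have hh0 : 1 ≤ h₀ := by omega
  obtain ⟨ss₁, s, ss₂, w₁, w', w₂, n₁, n', n₂, ha', hb', hss, rfl, rfl, d', d₁, d₂⟩ :=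
    dl.split_max hh0
  -- the achiever has positive height, hence is a nonterminal node
  obtain ⟨B, rfl⟩ : ∃ B, s = Symbol.nonterminal B := by
    cases d' with
    | leaf t => omega
    | node r' hr' w'' n'' h'' dl' => exact ⟨r'.input, rfl⟩
  refine ⟨B, w₁, w₂, n₁ + n₂ + 1, w', n', d'.root_mem, by omega, ?_, d'.cast' rfl rfl (by omega),
    rfl, by omega⟩
  intro u m' hu du
  have dall := d₁.append' ((DerList.singleton' du).append' d₂)
  rw [show ss₁ ++ ([Symbol.nonterminal B] ++ ss₂) = r.output from by rw [hss, List.singleton_append]] at dall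
  have dnode := Der.node r hr _ _ _ dall
  rw [hrA] at dnode
  exact ⟨_, dnode.cast' (by simp) (by omega) rfl⟩

def Pumpable (g : ContextFreeGrammar.{uN} T) (A : g.NT) (w : List T) (n : ℕ) : Prop :=
  ∃ (C : g.NT) (v wm x y z : List T) (c₁ c₂ n₂ h₂ : ℕ),
    w = v ++ wm ++ x ++ y ++ z ∧ Ctx g A v C z c₁ ∧ Ctx g C wm C y c₂ ∧ 1 ≤ c₂ ∧
    Der g (Symbol.nonterminal C) x n₂ h₂ ∧ n = c₁ + c₂ + n₂

lemma findx : ∀ n : ℕ, ∀ (A : g.NT) (w : List T) (h : ℕ) (seen : List g.NT),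
    Der g (Symbol.nonterminal A) w n h →
    seen.Nodup → (∀ x ∈ seen, x ∈ Inputs g) → A ∉ seen →
    (Inputs g).card < seen.length + h →
    Pumpable g A w n ∨ ∃ D ∈ seen, ∃ v z c x n₂ h₂, 1 ≤ c ∧ Ctx g A v D z c ∧
      Der g (Symbol.nonterminal D) x n₂ h₂ ∧ w = v ++ x ++ z ∧ n = c + n₂ := by
  intro n
  induction n using Nat.strong_induction_on with
  | _ n IH =>
  intro A w h seen d hnd hsub hAs hcard
  have hAI : A ∈ Inputs g := d.root_mem
  -- h ≥ 2 by pigeonhole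
  have hh2 : 2 ≤ h := by
    classical
    have hnd' : (A :: seen).Nodup := List.nodup_cons.mpr ⟨hAs, hnd⟩
    have hsub' : (A :: seen).toFinset ⊆ Inputs g := by
      intro x hx
      rw [List.mem_toFinset, List.mem_cons] at hx
      rcases hx with rfl | hx
      · exact hAI
      · exact hsub _ hx
    have := Finset.card_le_card hsub'
    rw [List.toFinset_card_of_nodup hnd'] at this
    simp only [List.length_cons] at this
    omega
  obtain ⟨B, v, z, c₁, w', n', hBI, hc₁, hctx, d', rfl, rfl⟩ := der_step d hh2
  by_cases hBA : B = A
  · subst hBA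
    exact Or.inl ⟨B, [], v, w', z, [], 0, c₁, n', _, by simp, ctx_refl B, hctx, hc₁, d',
      by omega⟩
  by_cases hBs : B ∈ seen
  · exact Or.inr ⟨B, hBs, v, z, c₁, w', n', h - 1, hc₁, hctx, d', rfl, by omega⟩
  · have hrec := IH n' (by omega) B w' (h - 1) (A :: seen) d'
      (List.nodup_cons.mpr ⟨hAs, hnd⟩)
      (by
        intro x hx
        rw [List.mem_cons] at hx
        rcases hx with rfl | hx
        · exact hAI
        · exact hsub _ hx)
      (by
        intro hc
        rw [List.mem_cons] at hc
        rcases hc with rfl | hc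
        · exact hBA rfl
        · exact hBs hc)
      (by simp only [List.length_cons]; omega)
    rcases hrec with ⟨C, v₂, wm, x, y, z₂, c₁', c₂', n₂, h₂, rfl, hctx1, hctx2, hc₂', dx, rfl⟩ |
      ⟨D, hD, v₂, z₂, c₂, x, n₂, h₂, hc₂, hctx2, dx, rfl, rfl⟩
    · refine Or.inl ⟨C, v ++ v₂, wm, x, y, z₂ ++ z, c₁ + c₁', c₂', n₂, h₂, by simp,
        ctx_comp hctx hctx1, hctx2, hc₂', dx, by omega⟩
    · rw [List.mem_cons] at hD
      rcases hD with rfl | hD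
      · -- D = A
        refine Or.inl ⟨_, [], v ++ v₂, x, z₂ ++ z, [], 0, c₁ + c₂, n₂, h₂, by simp,
          ctx_refl _, ctx_comp hctx hctx2, by omega, dx, by omega⟩
      · exact Or.inr ⟨D, hD, v ++ v₂, z₂ ++ z, c₁ + c₂, x, n₂, h₂, by omega,
          ctx_comp hctx hctx2, dx, by simp, by omega⟩

lemma ctx_pump {C : g.NT} {wm y x : List T} {c n₂ h₂ : ℕ} (hc : Ctx g C wm C y c)
    (hd : Der g (Symbol.nonterminal C) x n₂ h₂) :
    ∀ k, ∃ h', Der g (Symbol.nonterminal C) (lpow k wm ++ x ++ lpow k y) (n₂ + k * c) h' := by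
  intro k
  induction k with
  | zero => exact ⟨h₂, hd.cast' (by simp) (by omega) rfl⟩
  | succ k ih =>
    obtain ⟨h', d⟩ := ih
    obtain ⟨h'', d2⟩ := hc d
    refine ⟨h'', d2.cast' ?_ (by ring) rfl⟩
    rw [lpow_succ, lpow_succ' k y]
    simp [List.append_assoc]

lemma cfg_main (g : ContextFreeGrammar.{uN} T) (w₀ : List T) (hw : w₀ ∈ g.language)
    (hlen : Mbnd g ^ ((Inputs g).card + 1) < w₀.length) :
    ∃ v wm x y z : List T, w₀ = v ++ wm ++ x ++ y ++ z ∧ (wm ≠ [] ∨ y ≠ []) ∧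
      ∀ k, v ++ lpow k wm ++ x ++ lpow k y ++ z ∈ g.language := by
  classical
  have hP : ∃ n, ∃ h, Der g (Symbol.nonterminal g.initial) w₀ n h := by
    obtain ⟨n, h, d⟩ := der_of_mem hw
    exact ⟨n, h, d⟩
  obtain ⟨h, d⟩ := Nat.find_spec hP
  set n₀ := Nat.find hP with hn₀
  have hbound : w₀.length ≤ Mbnd g ^ h := der_bound n₀ d
  have hKh : (Inputs g).card + 1 < h := by
    by_contra hcon
    push_neg at hcon
    have := Nat.pow_le_pow_right (show 1 ≤ Mbnd g by have := two_le_Mbnd (g := g); omega) hcon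
    omega
  have hfind := findx n₀ g.initial w₀ h [] d List.nodup_nil (by simp) (by simp)
    (by simp only [List.length_nil]; omega)
  rcases hfind with ⟨C, v, wm, x, y, z, c₁, c₂, n₂, h₂, hw₀, hctx1, hctx2, hc₂, dx, hn⟩ |
    ⟨D, hD, -⟩
  · by_cases hboth : wm = [] ∧ y = []
    · exfalso
      obtain ⟨rfl, rfl⟩ := hboth
      obtain ⟨h', d'⟩ := hctx1 dx
      have : w₀ = v ++ x ++ z := by simpa using hw₀
      have hPm : ∃ hh, Der g (Symbol.nonterminal g.initial) w₀ (n₂ + c₁) hh :=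
        ⟨h', d'.cast' this.symm rfl rfl⟩
      have := Nat.find_min' hP hPm
      omega
    · refine ⟨v, wm, x, y, z, hw₀, by tauto, fun k => ?_⟩
      obtain ⟨hk, dk⟩ := ctx_pump hctx2 dx k
      obtain ⟨hk', dk'⟩ := hctx1 dk
      rw [ContextFreeGrammar.mem_language_iff]
      have := der_sound _ dk'
      simpa [List.append_assoc] using this
  · simp at hD

lemma not_cf : ¬ Language.IsContextFree ({u | IsInfInfix thueMorse u} : Language Bool) := by
  rintro ⟨g, hg⟩
  set N := Mbnd g ^ ((Inputs g).card + 1) with hN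
  set w₀ := seg thueMorse 0 (N + 1) with hw₀def
  have hwL : w₀ ∈ g.language := by
    rw [hg]
    exact seg_isInfInfix 0 (N + 1)
  have hlen : N < w₀.length := by rw [hw₀def, seg_length]; omega
  obtain ⟨v, wm, x, y, z, hsplit, hne, hpump⟩ := cfg_main g w₀ hwL hlen
  have hbig : (v ++ lpow 5 wm ++ x ++ lpow 5 y ++ z) ∈ g.language := hpump 5
  rw [hg] at hbig
  have hinf : IsInfInfix thueMorse (v ++ lpow 5 wm ++ x ++ lpow 5 y ++ z) := hbig
  rcases hne with hwm | hy
  · refine key_not_infix wm hwm (isInfInfix_of_append _ v (lpow 5 wm) (x ++ lpow 5 y ++ z) ?_)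
    simpa [List.append_assoc] using hinf
  · exact key_not_infix y hy
      (isInfInfix_of_append _ (v ++ lpow 5 wm ++ x) (lpow 5 y) z hinf)

end Aux

/-- The set of finite infixes of the Thue–Morse sequence is
neither regular nor context-free. -/
theorem thueMorse_infixes_not_regular_not_contextFree :
    ¬ IsRegularLang {u | IsInfInfix thueMorse u} ∧
    ¬ Language.IsContextFree ({u | IsInfInfix thueMorse u} : Language Bool) := by
  exact ⟨not_regular, not_cf⟩
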